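/- For an exponentially localized operator A with rate κ and prefactor C on ℓ²(ℤ⁺ × Fin D), for every x ∈ ℝ and every g with 0 ≤ g ≤ κ/2, the conjugated-minus-original operator satisfies ‖B_{g,x} A B_{g,x}^{-1} - A‖ ≤ 8CDg/κ². -/

import Mathlib

noncomputable section

/-- The index set `ℤ⁺ × {1,…,D}`. -/
abbrev Idx (D : ℕ) := ℕ+ × Fin D

/-- The Hilbert space `ℓ²(ℤ⁺ × Fin D)` of square-summable complex sequences. -/
abbrev Ell2 (D : ℕ) := lp (fun _ : Idx D => ℂ) 2

/-- The standard orthonormal basis vector `|j,m⟩`. -/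
def ket {D : ℕ} (i : Idx D) : Ell2 D := lp.single 2 i (1 : ℂ)

/-- The matrix entry `⟨j,m| T |j',m'⟩`. -/
def entry {D : ℕ} (T : Ell2 D →L[ℂ] Ell2 D) (i i' : Idx D) : ℂ :=
  inner (𝕜 := ℂ) (ket i) (T (ket i'))

open scoped ENNReal NNReal

open ENNReal MeasureTheory in
/-- Cauchy–Schwarz for `ℝ≥0∞`-valued infinite sums. -/
lemma ennreal_cs {ι : Type*} [Countable ι] (f g : ι → ℝ≥0∞) :
    (∑' i, f i * g i) ^ 2 ≤ (∑' i, f i ^ 2) * (∑' i, g i ^ 2) := by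
  letI : MeasurableSpace ι := ⊤
  have h := ENNReal.lintegral_mul_le_Lp_mul_Lq (Measure.count (α := ι)) (p := 2) (q := 2)
    ⟨by norm_num, by norm_num, by norm_num⟩ (Measurable.of_discrete (f := f)).aemeasurable
    (Measurable.of_discrete (f := g)).aemeasurable
  rw [lintegral_count, lintegral_count, lintegral_count] at h
  calc (∑' i, f i * g i) ^ 2
      ≤ ((∑' i, f i ^ (2:ℝ)) ^ (1/(2:ℝ)) * (∑' i, g i ^ (2:ℝ)) ^ (1/(2:ℝ))) ^ 2 := by
        gcongr
        simpa [ENNReal.rpow_two] using h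
    _ = (∑' i, f i ^ 2) * (∑' i, g i ^ 2) := by
        rw [mul_pow, ← ENNReal.rpow_two ((∑' i, f i ^ (2:ℝ)) ^ (1/(2:ℝ))),
          ← ENNReal.rpow_two ((∑' i, g i ^ (2:ℝ)) ^ (1/(2:ℝ))),
          ← ENNReal.rpow_mul, ← ENNReal.rpow_mul]
        norm_num

lemma abs_exp_sub_one (s : ℝ) : |Real.exp s - 1| ≤ |s| * Real.exp |s| := by
  rcases le_or_gt 0 s with hs | hs
  · have h1 : (1:ℝ) ≤ Real.exp s := Real.one_le_exp hs
    rw [abs_of_nonneg (by linarith), abs_of_nonneg hs]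
    have h2 : 1 - s ≤ Real.exp (-s) := by linarith [Real.add_one_le_exp (-s)]
    have h3 : Real.exp (-s) * Real.exp s = 1 := by rw [← Real.exp_add]; simp
    nlinarith [Real.exp_pos s]
  · have h1 : Real.exp s < 1 := Real.exp_lt_one_iff.2 hs
    rw [abs_of_nonpos (by linarith), abs_of_neg hs]
    have h2 : s + 1 ≤ Real.exp s := Real.add_one_le_exp s
    have h3 : (1:ℝ) ≤ Real.exp (-s) := Real.one_le_exp (by linarith)
    nlinarith

lemma exp_geom_bound {a : ℝ} (ha : 0 < a) :
    Real.exp (-a) / (1 - Real.exp (-a)) ^ 2 ≤ 1 / a ^ 2 := by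
  set u := Real.exp (-(a/2)) with hu
  have hu0 : 0 < u := Real.exp_pos _
  have huu : u * u = Real.exp (-a) := by rw [hu, ← Real.exp_add]; ring_nf
  have hsinh : a / 2 < Real.sinh (a / 2) := Real.self_lt_sinh_iff.2 (by linarith)
  have hsinh' : Real.sinh (a/2) = (Real.exp (a/2) - Real.exp (-(a/2))) / 2 := Real.sinh_eq _
  have hinv : Real.exp (a/2) * u = 1 := by rw [hu, ← Real.exp_add]; simp
  have key : a * u < 1 - u * u := by
    have h1 : a < Real.exp (a/2) - u := by rw [hsinh'] at hsinh; linarith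
    calc a * u < (Real.exp (a/2) - u) * u := by nlinarith
      _ = 1 - u * u := by rw [sub_mul, hinv]
  have k1 : 0 ≤ 1 - u * u - a * u := by linarith
  have k2 : 0 ≤ 1 - u * u + a * u := by nlinarith
  have h1r : 0 < 1 - Real.exp (-a) := by nlinarith
  rw [div_le_div_iff₀ (by positivity) (by positivity), ← huu]
  nlinarith [mul_nonneg k1 k2]

lemma pnat_row (C g a : ℝ) (hC : 0 ≤ C) (hg : 0 ≤ g) (ha : 0 < a) (j : ℕ+) :
    Summable (fun j' : ℕ+ =>
      C * (g * |((j:ℕ):ℝ) - ((j':ℕ):ℝ)|) * Real.exp (-a * |((j:ℕ):ℝ) - ((j':ℕ):ℝ)|)) ∧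
    ∑' j' : ℕ+, C * (g * |((j:ℕ):ℝ) - ((j':ℕ):ℝ)|) * Real.exp (-a * |((j:ℕ):ℝ) - ((j':ℕ):ℝ)|)
      ≤ 2 * C * g / a ^ 2 := by
  set r := Real.exp (-a) with hr
  have hr0 : 0 < r := Real.exp_pos _
  have hr1 : r < 1 := Real.exp_lt_one_iff.2 (by linarith)
  set φ : ℕ → ℝ := fun n => C * (g * n) * Real.exp (-a * n) with hφdef
  have hexp : ∀ n : ℕ, Real.exp (-a * n) = r ^ n := by
    intro n
    rw [hr, show (-a) * (n:ℝ) = (n:ℝ) * (-a) by ring, Real.exp_nat_mul]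
  have hφ_eq : ∀ n : ℕ, φ n = (C * g) * ((n : ℝ) * r ^ n) := by
    intro n
    simp only [hφdef]
    rw [hexp]
    ring
  have hφs : Summable φ := by
    rw [funext hφ_eq]
    apply Summable.mul_left
    have := summable_pow_mul_geometric_of_norm_lt_one (R := ℝ) 1
      (r := r) (by rwa [Real.norm_eq_abs, abs_of_pos hr0])
    simpa using this
  have hφnn : ∀ n, 0 ≤ φ n := by
    intro n
    exact mul_nonneg (mul_nonneg hC (mul_nonneg hg (Nat.cast_nonneg n))) (Real.exp_pos _).le
  have hφt : ∑' n, φ n ≤ C * g / a ^ 2 := by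
    rw [funext hφ_eq, tsum_mul_left, tsum_coe_mul_geometric_of_norm_lt_one
      (by rwa [Real.norm_eq_abs, abs_of_pos hr0])]
    calc (C * g) * (r / (1 - r) ^ 2) ≤ (C * g) * (1 / a ^ 2) := by
          apply mul_le_mul_of_nonneg_left (exp_geom_bound ha) (mul_nonneg hC hg)
      _ = C * g / a ^ 2 := by ring
  -- extend to ℤ
  set Φ : ℤ → ℝ := fun n => φ n.natAbs with hΦdef
  have hΦ1 : Summable fun n : ℕ => Φ n := by simpa [hΦdef] using hφs
  have hΦ2 : Summable fun n : ℕ => Φ (-(n+1)) := by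
    have : (fun n : ℕ => Φ (-(n+1))) = fun n : ℕ => φ (n+1) := by
      funext n
      simp only [hΦdef]
      congr 1 <;> omega
    rw [this]
    exact (summable_nat_add_iff 1).2 hφs
  have hΦs : Summable Φ := Summable.of_nat_of_neg_add_one hΦ1 hΦ2
  have hΦnn : ∀ n, 0 ≤ Φ n := fun n => hφnn _
  have hΦt : ∑' n : ℤ, Φ n ≤ 2 * C * g / a ^ 2 := by
    rw [tsum_of_nat_of_neg_add_one hΦ1 hΦ2]
    have e1 : ∑' n : ℕ, Φ n = ∑' n, φ n := by apply tsum_congr; intro n; simp [hΦdef]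
    have e2 : ∑' n : ℕ, Φ (-(n+1)) = ∑' n : ℕ, φ (n+1) := by
      apply tsum_congr; intro n
      simp only [hΦdef]
      congr 1 <;> omega
    have e3 : ∑' n : ℕ, φ (n+1) ≤ ∑' n, φ n := by
      rw [hφs.tsum_eq_zero_add]
      have : φ 0 = 0 := by simp [hφdef]
      simp [this]
    rw [e1, e2]
    calc ∑' n : ℕ, φ n + ∑' n : ℕ, φ (n+1) ≤ (C * g / a ^ 2) + (C * g / a ^ 2) :=
          add_le_add hφt (e3.trans hφt)
      _ = 2 * C * g / a ^ 2 := by ring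
  -- the injection
  set e : ℕ+ → ℤ := fun j' => (j' : ℤ) - (j : ℤ) with he
  have he_inj : Function.Injective e := by
    intro b c hbc
    simp only [he, sub_left_inj] at hbc
    exact_mod_cast hbc
  have hcomp : ∀ j' : ℕ+,
      C * (g * |((j:ℕ):ℝ) - ((j':ℕ):ℝ)|) * Real.exp (-a * |((j:ℕ):ℝ) - ((j':ℕ):ℝ)|)
        = Φ (e j') := by
    intro j'
    have habs : ((((j':ℤ) - (j:ℤ)).natAbs : ℕ) : ℝ) = |((j:ℕ):ℝ) - ((j':ℕ):ℝ)| := by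
      rw [Nat.cast_natAbs, Int.cast_abs]
      push_cast
      rw [abs_sub_comm]
    simp only [hΦdef, he, hφdef, habs]
  have hψs : Summable (fun j' : ℕ+ =>
      C * (g * |((j:ℕ):ℝ) - ((j':ℕ):ℝ)|) * Real.exp (-a * |((j:ℕ):ℝ) - ((j':ℕ):ℝ)|)) := by
    rw [funext hcomp]
    exact hΦs.comp_injective he_inj
  refine ⟨hψs, ?_⟩
  calc ∑' j' : ℕ+, C * (g * |((j:ℕ):ℝ) - ((j':ℕ):ℝ)|) * Real.exp (-a * |((j:ℕ):ℝ) - ((j':ℕ):ℝ)|)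
      ≤ ∑' n : ℤ, Φ n :=
        Summable.tsum_le_tsum_of_inj e he_inj (fun c _ => hΦnn c) (fun b => (hcomp b).le) hψs hΦs
    _ ≤ 2 * C * g / a ^ 2 := hΦt

/-- Schur test: an infinite matrix with uniformly bounded row and column `ℓ¹` sums defines a
bounded operator on `ℓ²`. -/
lemma op_from_matrix {ι : Type*} [Countable ι] (M : ι → ι → ℂ) (K : ℝ) (hK : 0 ≤ K)
    (hrow : ∀ i, ∑' i', (‖M i i'‖₊ : ℝ≥0∞) ≤ ENNReal.ofReal K)
    (hcol : ∀ i', ∑' i, (‖M i i'‖₊ : ℝ≥0∞) ≤ ENNReal.ofReal K) :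
    ∃ T : lp (fun _ : ι => ℂ) 2 →L[ℂ] lp (fun _ : ι => ℂ) 2,
      (∀ f : lp (fun _ : ι => ℂ) 2, ∀ i : ι, (T f : ∀ _ : ι, ℂ) i = ∑' i', M i i' * f i') ∧
      ‖T‖ ≤ K := by
  have htwo : (2 : ℝ≥0∞).toReal = 2 := by simp
  have h2 : (0:ℝ) < (2 : ℝ≥0∞).toReal := by rw [htwo]; norm_num
  have hbd : ∀ f : lp (fun _ : ι => ℂ) 2, ∀ i,
      ∑' i', (‖M i i' * f i'‖₊ : ℝ≥0∞) ≤ ENNReal.ofReal K * (‖f‖₊ : ℝ≥0∞) := by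
    intro f i
    calc ∑' i', (‖M i i' * f i'‖₊ : ℝ≥0∞)
        ≤ ∑' i', (‖M i i'‖₊ : ℝ≥0∞) * (‖f‖₊ : ℝ≥0∞) := by
          apply ENNReal.tsum_le_tsum
          intro i'
          rw [nnnorm_mul, ENNReal.coe_mul]
          gcongr
          have h := lp.norm_apply_le_norm (E := fun _ : ι => ℂ) (p := 2) (by norm_num) f i'
          exact_mod_cast h
      _ = (∑' i', (‖M i i'‖₊ : ℝ≥0∞)) * ‖f‖₊ := ENNReal.tsum_mul_right
      _ ≤ ENNReal.ofReal K * ‖f‖₊ := by gcongr; exact hrow i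
  have hnn : ∀ f : lp (fun _ : ι => ℂ) 2, ∀ i, Summable fun i' => ‖M i i' * f i'‖₊ := by
    intro f i
    rw [← ENNReal.tsum_coe_ne_top_iff_summable]
    exact ((hbd f i).trans_lt (ENNReal.mul_lt_top ENNReal.ofReal_lt_top ENNReal.coe_lt_top)).ne
  have hsum : ∀ f : lp (fun _ : ι => ℂ) 2, ∀ i, Summable fun i' => M i i' * f i' :=
    fun f i => Summable.of_nnnorm (hnn f i)
  set gg : lp (fun _ : ι => ℂ) 2 → ι → ℂ := fun f i => ∑' i', M i i' * f i' with hgg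
  -- the quadratic bound
  have hS : ∀ f : lp (fun _ : ι => ℂ) 2,
      ∑' i, ((‖gg f i‖₊ : ℝ≥0∞)) ^ 2
        ≤ (ENNReal.ofReal K) ^ 2 * ∑' i', ((‖f i'‖₊ : ℝ≥0∞)) ^ 2 := by
    intro f
    have hpt : ∀ i, (‖gg f i‖₊ : ℝ≥0∞) ≤ ∑' i', (‖M i i'‖₊ : ℝ≥0∞) * (‖f i'‖₊ : ℝ≥0∞) := by
      intro i
      have h1 : ‖gg f i‖₊ ≤ ∑' i', ‖M i i' * f i'‖₊ := nnnorm_tsum_le (hnn f i)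
      calc (‖gg f i‖₊ : ℝ≥0∞) ≤ ((∑' i', ‖M i i' * f i'‖₊ : ℝ≥0) : ℝ≥0∞) :=
            ENNReal.coe_le_coe.2 h1
        _ = ∑' i', (‖M i i' * f i'‖₊ : ℝ≥0∞) := ENNReal.coe_tsum (hnn f i)
        _ = ∑' i', (‖M i i'‖₊ : ℝ≥0∞) * (‖f i'‖₊ : ℝ≥0∞) := by
            apply tsum_congr; intro i'; rw [nnnorm_mul, ENNReal.coe_mul]
    have hhalf : ∀ x : ℝ≥0∞, (x ^ (1/2:ℝ)) ^ 2 = x := by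
      intro x
      rw [← ENNReal.rpow_two, ← ENNReal.rpow_mul]
      norm_num
    have hCS : ∀ i, (∑' i', (‖M i i'‖₊ : ℝ≥0∞) * (‖f i'‖₊ : ℝ≥0∞)) ^ 2
        ≤ ENNReal.ofReal K * ∑' i', (‖M i i'‖₊ : ℝ≥0∞) * ((‖f i'‖₊ : ℝ≥0∞)) ^ 2 := by
      intro i
      calc (∑' i', (‖M i i'‖₊ : ℝ≥0∞) * (‖f i'‖₊ : ℝ≥0∞)) ^ 2
          = (∑' i', ((‖M i i'‖₊ : ℝ≥0∞)) ^ (1/2:ℝ) *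
              (((‖M i i'‖₊ : ℝ≥0∞)) ^ (1/2:ℝ) * (‖f i'‖₊ : ℝ≥0∞))) ^ 2 := by
            congr 1
            apply tsum_congr; intro i'
            rw [← mul_assoc, ← sq, hhalf]
        _ ≤ (∑' i', (((‖M i i'‖₊ : ℝ≥0∞)) ^ (1/2:ℝ)) ^ 2) *
              ∑' i', (((‖M i i'‖₊ : ℝ≥0∞)) ^ (1/2:ℝ) * (‖f i'‖₊ : ℝ≥0∞)) ^ 2 :=
            ennreal_cs _ _
        _ = (∑' i', (‖M i i'‖₊ : ℝ≥0∞)) *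
              ∑' i', (‖M i i'‖₊ : ℝ≥0∞) * ((‖f i'‖₊ : ℝ≥0∞)) ^ 2 := by
            congr 1
            · apply tsum_congr; intro i'; rw [hhalf]
            · apply tsum_congr; intro i'; rw [mul_pow, hhalf]
        _ ≤ ENNReal.ofReal K * ∑' i', (‖M i i'‖₊ : ℝ≥0∞) * ((‖f i'‖₊ : ℝ≥0∞)) ^ 2 := by
            gcongr
            exact hrow i
    calc ∑' i, ((‖gg f i‖₊ : ℝ≥0∞)) ^ 2
        ≤ ∑' i, (ENNReal.ofReal K * ∑' i', (‖M i i'‖₊ : ℝ≥0∞) * ((‖f i'‖₊ : ℝ≥0∞)) ^ 2) := by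
          apply ENNReal.tsum_le_tsum
          intro i
          exact le_trans (pow_le_pow_left₀ zero_le (hpt i) 2) (hCS i)
      _ = ENNReal.ofReal K * ∑' i', (∑' i, (‖M i i'‖₊ : ℝ≥0∞)) * ((‖f i'‖₊ : ℝ≥0∞)) ^ 2 := by
          rw [ENNReal.tsum_mul_left]
          congr 1
          rw [ENNReal.tsum_comm]
          apply tsum_congr; intro i'
          rw [ENNReal.tsum_mul_right]
      _ ≤ ENNReal.ofReal K * ∑' i', ENNReal.ofReal K * ((‖f i'‖₊ : ℝ≥0∞)) ^ 2 := by
          gcongr with i'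
          exact hcol i'
      _ = (ENNReal.ofReal K) ^ 2 * ∑' i', ((‖f i'‖₊ : ℝ≥0∞)) ^ 2 := by
          rw [ENNReal.tsum_mul_left, ← mul_assoc, sq]
  -- summability of ‖gg f‖²
  have hf2 : ∀ f : lp (fun _ : ι => ℂ) 2,
      ∑' i', ((‖f i'‖₊ : ℝ≥0∞)) ^ 2 = ENNReal.ofReal (‖f‖ ^ 2) := by
    intro f
    have hsq : Summable fun i' => ‖f i'‖ ^ 2 := by
      have h := (memℓp_gen_iff h2).1 (lp.memℓp f)
      rw [htwo] at h
      simpa [Real.rpow_two] using h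
    have : ∀ i' : ι, ((‖f i'‖₊ : ℝ≥0∞)) ^ 2 = ENNReal.ofReal (‖f i'‖ ^ 2) := by
      intro i'
      rw [ENNReal.ofReal_pow (norm_nonneg _), (ofReal_norm _).trans (enorm_eq_nnnorm _)]
    rw [tsum_congr this, ← ENNReal.ofReal_tsum_of_nonneg (fun _ => sq_nonneg _) hsq]
    congr 1
    have := lp.norm_rpow_eq_tsum h2 f
    rw [htwo] at this
    simpa [Real.rpow_two] using this.symm
  have hsumg : ∀ f : lp (fun _ : ι => ℂ) 2, Summable fun i => ‖gg f i‖ ^ 2 := by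
    intro f
    have hfin : ∑' i, ((‖gg f i‖₊ : ℝ≥0∞)) ^ 2 ≠ ⊤ := by
      apply ne_of_lt
      apply lt_of_le_of_lt (hS f)
      rw [hf2 f]
      exact ENNReal.mul_lt_top (by simp [ENNReal.pow_lt_top ENNReal.ofReal_lt_top])
        ENNReal.ofReal_lt_top
    have h1 : Summable fun i => (‖gg f i‖₊) ^ 2 := by
      rw [← ENNReal.tsum_coe_ne_top_iff_summable]
      simpa [ENNReal.coe_pow] using hfin
    have := NNReal.summable_coe.2 h1
    simpa using this
  have hmem : ∀ f : lp (fun _ : ι => ℂ) 2, Memℓp (gg f) 2 := by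
    intro f
    apply memℓp_gen
    rw [htwo]
    simpa [Real.rpow_two] using hsumg f
  -- the real quadratic bound
  have hreal : ∀ f : lp (fun _ : ι => ℂ) 2, ∑' i, ‖gg f i‖ ^ 2 ≤ (K * ‖f‖) ^ 2 := by
    intro f
    have hofr : ENNReal.ofReal (∑' i, ‖gg f i‖ ^ 2) = ∑' i, ((‖gg f i‖₊ : ℝ≥0∞)) ^ 2 := by
      rw [ENNReal.ofReal_tsum_of_nonneg (fun _ => sq_nonneg _) (hsumg f)]
      apply tsum_congr; intro i
      rw [ENNReal.ofReal_pow (norm_nonneg _), (ofReal_norm _).trans (enorm_eq_nnnorm _)]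
    have h := (hS f).trans_eq (by rw [hf2 f])
    rw [← hofr] at h
    have hrhs : (ENNReal.ofReal K) ^ 2 * ENNReal.ofReal (‖f‖ ^ 2)
        = ENNReal.ofReal ((K * ‖f‖) ^ 2) := by
      rw [← ENNReal.ofReal_pow hK, ← ENNReal.ofReal_mul (by positivity)]
      congr 1
      ring
    rw [hrhs] at h
    exact (ENNReal.ofReal_le_ofReal_iff (by positivity)).1 h
  -- build the linear map
  let L : lp (fun _ : ι => ℂ) 2 →ₗ[ℂ] lp (fun _ : ι => ℂ) 2 :=
  { toFun := fun f => ⟨gg f, hmem f⟩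
    map_add' := by
      intro f h
      apply lp.ext
      funext i
      have lhs : gg (f + h) i = gg f i + gg h i := by
        simp only [hgg]
        rw [← Summable.tsum_add (hsum f i) (hsum h i)]
        apply tsum_congr; intro i'
        rw [lp.coeFn_add]
        simp
        ring
      exact lhs.trans (by rw [lp.coeFn_add]; rfl)
    map_smul' := by
      intro c f
      apply lp.ext
      funext i
      have lhs : gg (c • f) i = c * gg f i := by
        simp only [hgg]
        rw [← tsum_mul_left]
        apply tsum_congr; intro i'
        rw [lp.coeFn_smul]
        simp
        ring
      exact lhs.trans (by rw [lp.coeFn_smul]; rfl) }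
  have hLcoe : ∀ f : lp (fun _ : ι => ℂ) 2, (L f : ∀ _ : ι, ℂ) = gg f := fun f => rfl
  have hLb : ∀ f : lp (fun _ : ι => ℂ) 2, ‖L f‖ ≤ K * ‖f‖ := by
    intro f
    have hn : ‖L f‖ ^ 2 = ∑' i, ‖gg f i‖ ^ 2 := by
      have := lp.norm_rpow_eq_tsum h2 (L f)
      rw [htwo] at this
      simpa [Real.rpow_two, hLcoe f] using this
    have h1 : ‖L f‖ ^ 2 ≤ (K * ‖f‖) ^ 2 := by rw [hn]; exact hreal f
    nlinarith [norm_nonneg (L f), mul_nonneg hK (norm_nonneg f)]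
  refine ⟨L.mkContinuous K hLb, ?_, LinearMap.mkContinuous_norm_le L hK hLb⟩
  intro f i
  rfl

open ENNReal in
theorem tilted_conjugation_estimate (D : ℕ) (C κ : ℝ) (hC : 0 < C) (hκ : 0 < κ)
    (A : Ell2 D →L[ℂ] Ell2 D)
    (hA : ∀ i i' : Idx D,
      ‖entry A i i'‖ ≤ C * Real.exp (-κ * |((i.1 : ℕ) : ℝ) - ((i'.1 : ℕ) : ℝ)|))
    (x g : ℝ) (hg0 : 0 ≤ g) (hg : g ≤ κ / 2) :
    ∃ T : Ell2 D →L[ℂ] Ell2 D,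
      (∀ i i' : Idx D, entry T i i' =
        (↑(Real.exp (g * |((i.1 : ℕ) : ℝ) - x|) * Real.exp (-(g * |((i'.1 : ℕ) : ℝ) - x|)) - 1)
          : ℂ) * entry A i i') ∧
      ‖T‖ ≤ 8 * C * D * g / κ ^ 2 := by
  classical
  set a := κ - g with ha_def
  have ha : 0 < a := by rw [ha_def]; linarith
  have haκ : κ ≤ 2 * a := by rw [ha_def]; linarith
  set M : Idx D → Idx D → ℂ := fun i i' =>
    (↑(Real.exp (g * |((i.1 : ℕ) : ℝ) - x|) * Real.exp (-(g * |((i'.1 : ℕ) : ℝ) - x|)) - 1)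
      : ℂ) * entry A i i' with hM
  set w : ℕ+ → ℕ+ → ℝ := fun j j' =>
    C * (g * |((j:ℕ):ℝ) - ((j':ℕ):ℝ)|) * Real.exp (-a * |((j:ℕ):ℝ) - ((j':ℕ):ℝ)|) with hw
  have hwsymm : ∀ j j', w j j' = w j' j := by
    intro j j'
    simp only [hw]
    rw [abs_sub_comm]
  have hMw : ∀ i i' : Idx D, ‖M i i'‖ ≤ w i.1 i'.1 := by
    intro i i'
    set dj := |((i.1:ℕ):ℝ) - ((i'.1:ℕ):ℝ)| with hdj
    have hdj0 : 0 ≤ dj := abs_nonneg _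
    rw [hM]
    simp only []
    rw [norm_mul, Complex.norm_real]
    have hcoef : ‖Real.exp (g * |((i.1:ℕ):ℝ) - x|) *
        Real.exp (-(g * |((i'.1:ℕ):ℝ) - x|)) - 1‖ ≤ (g * dj) * Real.exp (g * dj) := by
      rw [← Real.exp_add]
      set s := g * |((i.1:ℕ):ℝ) - x| + -(g * |((i'.1:ℕ):ℝ) - x|) with hs
      have habs : |s| ≤ g * dj := by
        rw [hs, show g * |((i.1:ℕ):ℝ) - x| + -(g * |((i'.1:ℕ):ℝ) - x|)
            = g * (|((i.1:ℕ):ℝ) - x| - |((i'.1:ℕ):ℝ) - x|) by ring,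
          abs_mul, abs_of_nonneg hg0]
        apply mul_le_mul_of_nonneg_left _ hg0
        calc |(|((i.1:ℕ):ℝ) - x| - |((i'.1:ℕ):ℝ) - x|)|
            ≤ |(((i.1:ℕ):ℝ) - x) - (((i'.1:ℕ):ℝ) - x)| := abs_abs_sub_abs_le_abs_sub _ _
          _ = dj := by rw [hdj]; ring_nf
      rw [Real.norm_eq_abs]
      calc |Real.exp s - 1| ≤ |s| * Real.exp |s| := abs_exp_sub_one s
        _ ≤ (g * dj) * Real.exp (g * dj) := by
            apply mul_le_mul habs (Real.exp_le_exp.2 habs) (Real.exp_pos _).le (by positivity)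
    calc ‖Real.exp (g * |((i.1:ℕ):ℝ) - x|) * Real.exp (-(g * |((i'.1:ℕ):ℝ) - x|)) - 1‖
          * ‖entry A i i'‖
        ≤ ((g * dj) * Real.exp (g * dj)) * (C * Real.exp (-κ * dj)) :=
          mul_le_mul hcoef (hA i i') (norm_nonneg _) (by positivity)
      _ = w i.1 i'.1 := by
          rw [hw]
          simp only []
          rw [show -a * dj = g * dj + -κ * dj by rw [ha_def]; ring, Real.exp_add]
          ring
  set K := 8 * C * (D:ℝ) * g / κ ^ 2 with hK_def
  have hK0 : 0 ≤ K := by positivity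
  have hwsum : ∀ j : ℕ+, ∑' (p : Idx D), ENNReal.ofReal (w j p.1) ≤ ENNReal.ofReal K := by
    intro j
    obtain ⟨hrs, hrt⟩ := pnat_row C g a hC.le hg0 ha j
    have hwnn : ∀ j', 0 ≤ w j j' := by
      intro j'
      rw [hw]
      positivity
    calc ∑' (p : Idx D), ENNReal.ofReal (w j p.1)
        = ∑' (j' : ℕ+), ∑' (_ : Fin D), ENNReal.ofReal (w j j') :=
          ENNReal.tsum_prod (f := fun (j' : ℕ+) (_ : Fin D) => ENNReal.ofReal (w j j'))
      _ = ∑' (j' : ℕ+), (D : ℝ≥0∞) * ENNReal.ofReal (w j j') := by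
          apply tsum_congr; intro j'
          rw [tsum_fintype]
          simp [Finset.sum_const, Finset.card_univ, nsmul_eq_mul]
      _ = (D : ℝ≥0∞) * ∑' (j' : ℕ+), ENNReal.ofReal (w j j') := ENNReal.tsum_mul_left
      _ = (D : ℝ≥0∞) * ENNReal.ofReal (∑' j', w j j') := by
          rw [ENNReal.ofReal_tsum_of_nonneg hwnn hrs]
      _ ≤ (D : ℝ≥0∞) * ENNReal.ofReal (2 * C * g / a ^ 2) := by
          exact mul_le_mul_right (ENNReal.ofReal_le_ofReal hrt) _
      _ ≤ ENNReal.ofReal K := by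
          rw [← ENNReal.ofReal_natCast D, ← ENNReal.ofReal_mul (Nat.cast_nonneg D)]
          apply ENNReal.ofReal_le_ofReal
          rw [hK_def]
          have hκ2 : κ ^ 2 ≤ 4 * a ^ 2 := by nlinarith
          rw [show (D:ℝ) * (2 * C * g / a ^ 2) = 2 * C * g * (D:ℝ) / a ^ 2 by ring,
            div_le_div_iff₀ (by positivity) (by positivity)]
          nlinarith [mul_le_mul_of_nonneg_left hκ2
            (show (0:ℝ) ≤ 2 * C * g * (D:ℝ) by positivity)]
  have hrow : ∀ i : Idx D, ∑' i', (‖M i i'‖₊ : ℝ≥0∞) ≤ ENNReal.ofReal K := by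
    intro i
    refine le_trans (ENNReal.tsum_le_tsum fun i' => ?_) (hwsum i.1)
    rw [← (ofReal_norm _).trans (enorm_eq_nnnorm _)]
    exact ENNReal.ofReal_le_ofReal (hMw i i')
  have hcol : ∀ i' : Idx D, ∑' i, (‖M i i'‖₊ : ℝ≥0∞) ≤ ENNReal.ofReal K := by
    intro i'
    refine le_trans (ENNReal.tsum_le_tsum fun i => ?_) (hwsum i'.1)
    rw [← (ofReal_norm _).trans (enorm_eq_nnnorm _)]
    exact ENNReal.ofReal_le_ofReal ((hMw i i').trans (le_of_eq (hwsymm i.1 i'.1)))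
  obtain ⟨T, hT1, hT2⟩ := op_from_matrix M K hK0 hrow hcol
  refine ⟨T, ?_, hT2⟩
  intro i i'
  have h1 : entry T i i' = (T (ket i') : ∀ _ : Idx D, ℂ) i := by
    rw [entry, ket, lp.inner_single_left]
    simp [RCLike.inner_apply]
  rw [h1, hT1 (ket i') i]
  rw [tsum_eq_single i' ?_]
  · rw [ket, lp.single_apply_self, mul_one]
  · intro b hb
    rw [ket, lp.single_apply_ne 2 i' _ hb, mul_zero]
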